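/- Let I ⊂ {1,…,n} and for each i ∈ I let r̲_i, r̄_i : l∞^{n−1} → ℝ be 1-Lipschitz maps. Define Q := { x ∈ l∞^n : for all i ∈ I, r̲_i(π̂_i(x)) ≤ x_i ≤ r̄_i(π̂_i(x)) }. If Q ≠ ∅ and r̲_i ≤ r̄_i pointwise for every i ∈ I, then Q is injective. -/

import Mathlib

open Set Metric

/-- A metric space `X` is *injective* if for all metric spaces `A`, `B`, every isometric
embedding `i : A → B` and every `1`-Lipschitz map `f : A → X`, there is a `1`-Lipschitz
map `g : B → X` with `g ∘ i = f`. -/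
def IsInjectiveMetricSpace (X : Type) [MetricSpace X] : Prop :=
  ∀ (A B : Type) [MetricSpace A] [MetricSpace B], ∀ (i : A → B) (f : A → X),
    Isometry i → LipschitzWith 1 f →
      ∃ g : B → X, LipschitzWith 1 g ∧ ∀ a, g (i a) = f a

/-- A subset of `l∞ⁿ = (Fin n → ℝ)` (whose product metric is the sup-metric) is injective
if it is an injective metric space with the induced metric. -/
def IsInjectiveSubset {n : ℕ} (S : Set (Fin n → ℝ)) : Prop :=
  IsInjectiveMetricSpace S

/-- The `1`-Lipschitz map `π̂ᵢ : l∞^{n+1} → l∞ⁿ` deleting the `i`-th coordinate. -/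
def deleteCoord {n : ℕ} (i : Fin (n + 1)) (x : Fin (n + 1) → ℝ) : Fin n → ℝ :=
  fun j => x (i.succAbove j)

lemma dist_deleteCoord {n : ℕ} (i : Fin (n + 1)) (z w : Fin (n + 1) → ℝ) :
    dist (deleteCoord i z) (deleteCoord i w) ≤ dist z w := by
  rw [dist_pi_le_iff dist_nonneg]
  intro j
  exact dist_le_pi_dist z w _

/-- The clamping map on a box has a fixed point satisfying the sandwich constraints. -/
lemma box_fixed {n : ℕ} (I : Set (Fin (n + 1)))
    (rlo rhi : Fin (n + 1) → (Fin n → ℝ) → ℝ)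
    (a b : Fin (n + 1) → ℝ)
    (hab : ∀ i, a i ≤ b i)
    (hle : ∀ i ∈ I, ∀ y, rlo i y ≤ rhi i y)
    (hdlo : ∀ i ∈ I, ∀ z w : Fin (n + 1) → ℝ,
      dist (rlo i (deleteCoord i z)) (rlo i (deleteCoord i w)) ≤ dist z w)
    (hdhi : ∀ i ∈ I, ∀ z w : Fin (n + 1) → ℝ,
      dist (rhi i (deleteCoord i z)) (rhi i (deleteCoord i w)) ≤ dist z w)
    (hrlob : ∀ z ∈ Set.Icc a b, ∀ i ∈ I, rlo i (deleteCoord i z) ≤ b i)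
    (hrhia : ∀ z ∈ Set.Icc a b, ∀ i ∈ I, a i ≤ rhi i (deleteCoord i z)) :
    ∃ z ∈ Set.Icc a b, ∀ i ∈ I,
      rlo i (deleteCoord i z) ≤ z i ∧ z i ≤ rhi i (deleteCoord i z) := by
  classical
  set F : (Fin (n + 1) → ℝ) → (Fin (n + 1) → ℝ) := fun z i =>
    if i ∈ I then
      min (min (b i) (rhi i (deleteCoord i z)))
        (max (max (a i) (rlo i (deleteCoord i z))) (z i))
    else min (b i) (max (a i) (z i)) with hF
  have hFlip : ∀ z w, dist (F z) (F w) ≤ dist z w := by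
    intro z w
    rw [dist_pi_le_iff dist_nonneg]
    intro i
    have hzc : dist (z i) (w i) ≤ dist z w := dist_le_pi_dist z w i
    rw [Real.dist_eq] at hzc ⊢
    by_cases hi : i ∈ I
    · simp only [hF, if_pos hi]
      have hlod := hdlo i hi z w
      have hhid := hdhi i hi z w
      rw [Real.dist_eq] at hlod hhid
      refine le_trans (abs_min_sub_min_le_max _ _ _ _) (max_le ?_ ?_)
      · refine le_trans (abs_min_sub_min_le_max _ _ _ _) (max_le ?_ hhid)
        simpa using dist_nonneg.trans (le_refl (dist z w))
      · refine le_trans (abs_max_sub_max_le_max _ _ _ _) (max_le ?_ hzc)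
        refine le_trans (abs_max_sub_max_le_max _ _ _ _) (max_le ?_ hlod)
        simpa using dist_nonneg.trans (le_refl (dist z w))
    · simp only [hF, if_neg hi]
      refine le_trans (abs_min_sub_min_le_max _ _ _ _) (max_le ?_ ?_)
      · simpa using dist_nonneg.trans (le_refl (dist z w))
      · refine le_trans (abs_max_sub_max_le_max _ _ _ _) (max_le ?_ hzc)
        simpa using dist_nonneg.trans (le_refl (dist z w))
  have hFbox : ∀ z ∈ Set.Icc a b, F z ∈ Set.Icc a b := by
    intro z hz
    constructor <;> intro i
    · by_cases hi : i ∈ I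
      · simp only [hF, if_pos hi]
        refine le_min (le_min (hab i) (hrhia z hz i hi)) ?_
        exact le_trans (le_max_left _ _) (le_max_left _ _)
      · simp only [hF, if_neg hi]
        exact le_min (hab i) (le_max_left _ _)
    · by_cases hi : i ∈ I
      · simp only [hF, if_pos hi]
        exact le_trans (min_le_left _ _) (min_le_left _ _)
      · simp only [hF, if_neg hi]
        exact min_le_left _ _
  have habIcc : a ∈ Set.Icc a b := ⟨le_rfl, fun i => hab i⟩
  have hFcont : Continuous F :=
    (LipschitzWith.of_dist_le_mul (fun z w => by rw [NNReal.coe_one, one_mul]; exact hFlip z w)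
      : LipschitzWith 1 F).continuous
  have happrox : ∀ ε : ℝ, 0 < ε → ε < 1 → ∃ w ∈ Set.Icc a b, dist w (F w) ≤ ε * dist a b := by
    intro ε hε hε1
    set G : (Fin (n + 1) → ℝ) → (Fin (n + 1) → ℝ) := fun z => ε • a + (1 - ε) • F z with hG
    have hKnn : (0 : ℝ) ≤ 1 - ε := by linarith
    have hGdist : ∀ z w, dist (G z) (G w) = (1 - ε) * dist (F z) (F w) := by
      intro z w
      simp only [hG]
      rw [dist_add_left, dist_smul₀, Real.norm_eq_abs, abs_of_nonneg hKnn]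
    have hcontr : ContractingWith ⟨1 - ε, hKnn⟩ G := by
      constructor
      · exact NNReal.coe_lt_coe.mp (show NNReal.toReal (Subtype.mk (1 - ε) hKnn) < NNReal.toReal 1 by
          rw [NNReal.coe_one]; show (1 - ε : ℝ) < 1; linarith)
      · refine LipschitzWith.of_dist_le_mul fun z w => ?_
        rw [hGdist]
        have := hFlip z w
        have hd := dist_nonneg (x := z) (y := w)
        push_cast
        show (1 - ε) * dist (F z) (F w) ≤ (1 - ε) * dist z w
        nlinarith
    set w := ContractingWith.fixedPoint G hcontr with hw
    have hwfix : G w = w := hcontr.fixedPoint_isFixedPt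
    have hGbox : ∀ z ∈ Set.Icc a b, G z ∈ Set.Icc a b := by
      intro z hz
      have hFz := hFbox z hz
      constructor <;> intro i
      · have h1 := hFz.1 i
        have h2 := hab i
        simp only [hG, Pi.add_apply, Pi.smul_apply, smul_eq_mul]
        nlinarith
      · have h1 := hFz.2 i
        have h2 := hab i
        simp only [hG, Pi.add_apply, Pi.smul_apply, smul_eq_mul]
        nlinarith
    have hiter : ∀ k, G^[k] a ∈ Set.Icc a b := by
      intro k
      induction k with
      | zero => simpa using habIcc
      | succ m ih => rw [Function.iterate_succ_apply']; exact hGbox _ ih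
    have hwbox : w ∈ Set.Icc a b :=
      isClosed_Icc.mem_of_tendsto (hcontr.tendsto_iterate_fixedPoint a)
        (Filter.Eventually.of_forall hiter)
    refine ⟨w, hwbox, ?_⟩
    have hFw := hFbox w hwbox
    have hdab : dist a (F w) ≤ dist a b := by
      rw [dist_pi_le_iff dist_nonneg]
      intro i
      have h1 := hFw.1 i
      have h2 := hFw.2 i
      have hib : |a i - b i| ≤ dist a b := by
        rw [← Real.dist_eq]; exact dist_le_pi_dist a b i
      have hib2 : b i - a i ≤ dist a b := by
        rw [abs_sub_comm] at hib
        exact le_trans (le_abs_self _) hib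
      rw [Real.dist_eq, abs_le]
      constructor <;> linarith
    have hsplit : ε • a + (1 - ε) • F w - F w = ε • (a - F w) := by
      rw [smul_sub, sub_smul, one_smul]; abel
    calc dist w (F w) = dist (G w) (F w) := by rw [hwfix]
      _ = ε * dist a (F w) := by
          rw [dist_eq_norm, hG]
          rw [show ε • a + (1 - ε) • F w - F w = ε • (a - F w) from hsplit]
          rw [norm_smul, Real.norm_eq_abs, abs_of_pos hε, ← dist_eq_norm]
      _ ≤ ε * dist a b := by nlinarith
  obtain ⟨z0, hz0mem, hz0min⟩ :=
    isCompact_Icc.exists_isMinOn ⟨a, habIcc⟩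
      ((continuous_id.dist hFcont).continuousOn :
        ContinuousOn (fun z => dist z (F z)) (Set.Icc a b))
  have hz00 : dist z0 (F z0) ≤ 0 := by
    refine le_of_forall_pos_le_add fun δ hδ => ?_
    set D := dist a b with hD
    have hD0 : 0 ≤ D := dist_nonneg
    obtain ⟨w, hwmem, hwd⟩ := happrox (min (1 / 2) (δ / (D + 1)))
      (lt_min (by norm_num) (by positivity)) (lt_of_le_of_lt (min_le_left _ _) (by norm_num))
    have hmin := (isMinOn_iff.mp hz0min) w hwmem
    simp only [id_eq] at hmin
    have h1 : min (1 / 2) (δ / (D + 1)) * D ≤ δ := by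
      have h2 : min (1 / 2) (δ / (D + 1)) ≤ δ / (D + 1) := min_le_right _ _
      have h3 : min (1 / 2) (δ / (D + 1)) * D ≤ δ / (D + 1) * D := by nlinarith
      have h4 : δ / (D + 1) * D ≤ δ := by
        rw [div_mul_eq_mul_div, div_le_iff₀ (by linarith)]
        nlinarith
      linarith
    linarith
  have hfix : F z0 = z0 := (eq_of_dist_eq_zero (le_antisymm hz00 dist_nonneg)).symm
  refine ⟨z0, hz0mem, fun i hi => ?_⟩
  have hzi : z0 i = min (min (b i) (rhi i (deleteCoord i z0)))
      (max (max (a i) (rlo i (deleteCoord i z0))) (z0 i)) := by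
    conv_lhs => rw [← hfix]
    simp only [hF, if_pos hi]
  constructor
  · have hLU : max (a i) (rlo i (deleteCoord i z0)) ≤ min (b i) (rhi i (deleteCoord i z0)) :=
      max_le (le_min (hab i) (hrhia z0 hz0mem i hi))
        (le_min (hrlob z0 hz0mem i hi) (hle i hi _))
    have h5 : max (a i) (rlo i (deleteCoord i z0)) ≤ z0 i := by
      rw [hzi]
      exact le_min hLU (le_max_left _ _)
    exact le_trans (le_max_right _ _) h5
  · have h5 : z0 i ≤ min (b i) (rhi i (deleteCoord i z0)) := by
      rw [hzi]; exact min_le_left _ _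
    exact le_trans h5 (min_le_right _ _)

/-- Intersection-of-balls property for the sandwich set. -/
lemma exists_center {n : ℕ} (I : Set (Fin (n + 1)))
    (rlo rhi : Fin (n + 1) → (Fin n → ℝ) → ℝ)
    (hlo : ∀ i ∈ I, LipschitzWith 1 (rlo i)) (hhi : ∀ i ∈ I, LipschitzWith 1 (rhi i))
    (hle : ∀ i ∈ I, ∀ y, rlo i y ≤ rhi i y)
    {ι : Type} [Nonempty ι] (x : ι → Fin (n + 1) → ℝ)
    (hx : ∀ α, ∀ i ∈ I, rlo i (deleteCoord i (x α)) ≤ x α i ∧ x α i ≤ rhi i (deleteCoord i (x α)))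
    (r : ι → ℝ) (hr : ∀ α β, dist (x α) (x β) ≤ r α + r β) :
    ∃ z, (∀ i ∈ I, rlo i (deleteCoord i z) ≤ z i ∧ z i ≤ rhi i (deleteCoord i z)) ∧
      ∀ α, dist z (x α) ≤ r α := by
  classical
  obtain ⟨α₀⟩ := ‹Nonempty ι›
  have hr0 : ∀ α, 0 ≤ r α := fun α => by
    have := hr α α; simp at this; linarith
  have hcoord : ∀ α β (i : Fin (n + 1)), x α i - r α ≤ x β i + r β := by
    intro α β i
    have h1 : dist (x α i) (x β i) ≤ r α + r β := le_trans (dist_le_pi_dist _ _ i) (hr α β)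
    rw [Real.dist_eq] at h1
    have h2 := abs_le.mp h1
    linarith [h2.1, h2.2]
  set a : Fin (n + 1) → ℝ := fun i => ⨆ α, (x α i - r α) with ha
  set b : Fin (n + 1) → ℝ := fun i => ⨅ α, (x α i + r α) with hb
  have hbddA : ∀ i, BddAbove (Set.range fun α => x α i - r α) :=
    fun i => ⟨x α₀ i + r α₀, by rintro _ ⟨α, rfl⟩; exact hcoord α α₀ i⟩
  have hbddB : ∀ i, BddBelow (Set.range fun α => x α i + r α) :=
    fun i => ⟨x α₀ i - r α₀, by rintro _ ⟨β, rfl⟩; exact hcoord α₀ β i⟩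
  have hal : ∀ i α, x α i - r α ≤ a i := fun i α => le_ciSup (hbddA i) α
  have hbl : ∀ i α, b i ≤ x α i + r α := fun i α => ciInf_le (hbddB i) α
  have hab : ∀ i, a i ≤ b i := fun i => ciSup_le fun α => le_ciInf fun β => hcoord α β i
  have hboxdist : ∀ z, z ∈ Set.Icc a b → ∀ α, dist z (x α) ≤ r α := by
    intro z hz α
    rw [dist_pi_le_iff (hr0 α)]
    intro i
    have h1 : a i ≤ z i := hz.1 i
    have h2 : z i ≤ b i := hz.2 i
    rw [Real.dist_eq, abs_le]
    constructor <;> linarith [hal i α, hbl i α]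
  have hrlob : ∀ z ∈ Set.Icc a b, ∀ i ∈ I, rlo i (deleteCoord i z) ≤ b i := by
    intro z hz i hi
    refine le_ciInf fun α => ?_
    have hd : dist (rlo i (deleteCoord i z)) (rlo i (deleteCoord i (x α))) ≤ r α := by
      calc dist (rlo i (deleteCoord i z)) (rlo i (deleteCoord i (x α)))
          ≤ 1 * dist (deleteCoord i z) (deleteCoord i (x α)) := (hlo i hi).dist_le_mul _ _
        _ ≤ dist z (x α) := by rw [one_mul]; exact dist_deleteCoord _ _ _
        _ ≤ r α := hboxdist z hz α
    rw [Real.dist_eq] at hd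
    have h2 := (abs_le.mp hd).2
    have h3 := (hx α i hi).1
    linarith
  have hrhia : ∀ z ∈ Set.Icc a b, ∀ i ∈ I, a i ≤ rhi i (deleteCoord i z) := by
    intro z hz i hi
    refine ciSup_le fun α => ?_
    have hd : dist (rhi i (deleteCoord i z)) (rhi i (deleteCoord i (x α))) ≤ r α := by
      calc dist (rhi i (deleteCoord i z)) (rhi i (deleteCoord i (x α)))
          ≤ 1 * dist (deleteCoord i z) (deleteCoord i (x α)) := (hhi i hi).dist_le_mul _ _
        _ ≤ dist z (x α) := by rw [one_mul]; exact dist_deleteCoord _ _ _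
        _ ≤ r α := hboxdist z hz α
    rw [Real.dist_eq] at hd
    have h1 := (abs_le.mp hd).1
    have h3 := (hx α i hi).2
    linarith
  have hdlo : ∀ i ∈ I, ∀ z w : Fin (n + 1) → ℝ,
      dist (rlo i (deleteCoord i z)) (rlo i (deleteCoord i w)) ≤ dist z w := by
    intro i hi z w
    calc dist (rlo i (deleteCoord i z)) (rlo i (deleteCoord i w))
        ≤ 1 * dist (deleteCoord i z) (deleteCoord i w) := (hlo i hi).dist_le_mul _ _
      _ ≤ dist z w := by rw [one_mul]; exact dist_deleteCoord _ _ _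
  have hdhi : ∀ i ∈ I, ∀ z w : Fin (n + 1) → ℝ,
      dist (rhi i (deleteCoord i z)) (rhi i (deleteCoord i w)) ≤ dist z w := by
    intro i hi z w
    calc dist (rhi i (deleteCoord i z)) (rhi i (deleteCoord i w))
        ≤ 1 * dist (deleteCoord i z) (deleteCoord i w) := (hhi i hi).dist_le_mul _ _
      _ ≤ dist z w := by rw [one_mul]; exact dist_deleteCoord _ _ _
  obtain ⟨z, hzbox, hzQ⟩ := box_fixed I rlo rhi a b hab hle hdlo hdhi hrlob hrhia
  exact ⟨z, hzQ, hboxdist z hzbox⟩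

/-- If `Q = {x ∈ l∞^{n+1} : ∀ i ∈ I, r̲ᵢ(π̂ᵢ x) ≤ xᵢ ≤ r̄ᵢ(π̂ᵢ x)}` is nonempty, where the
`r̲ᵢ, r̄ᵢ : l∞ⁿ → ℝ` are `1`-Lipschitz and `r̲ᵢ ≤ r̄ᵢ` pointwise, then `Q` is injective. -/
theorem sandwich_injective {n : ℕ} (I : Set (Fin (n + 1)))
    (rlo rhi : Fin (n + 1) → (Fin n → ℝ) → ℝ)
    (hlo : ∀ i ∈ I, LipschitzWith 1 (rlo i)) (hhi : ∀ i ∈ I, LipschitzWith 1 (rhi i))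
    (hle : ∀ i ∈ I, ∀ y, rlo i y ≤ rhi i y)
    (Q : Set (Fin (n + 1) → ℝ))
    (hQ : Q = {x | ∀ i ∈ I, rlo i (deleteCoord i x) ≤ x i ∧ x i ≤ rhi i (deleteCoord i x)})
    (hne : Q.Nonempty) :
    IsInjectiveSubset Q := by
  classical
  obtain ⟨q₀, hq₀⟩ := hne
  have hmem : ∀ v : Fin (n + 1) → ℝ, v ∈ Q ↔
      ∀ i ∈ I, rlo i (deleteCoord i v) ≤ v i ∧ v i ≤ rhi i (deleteCoord i v) := by
    intro v; rw [hQ]; exact Iff.rfl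
  unfold IsInjectiveSubset IsInjectiveMetricSpace
  intro A B _ _ j f hj hf
  -- the partially-defined-extension poset
  let Good : Set B × (B → ↥Q) → Prop := fun p =>
    (∀ a, j a ∈ p.1) ∧ (∀ a, p.2 (j a) = f a) ∧
      ∀ b ∈ p.1, ∀ b' ∈ p.1, dist (p.2 b) (p.2 b') ≤ dist b b'
  let rel : {p : Set B × (B → ↥Q) // Good p} → {p : Set B × (B → ↥Q) // Good p} → Prop :=
    fun p q => p.1.1 ⊆ q.1.1 ∧ ∀ b ∈ p.1.1, q.1.2 b = p.1.2 b
  have htrans : ∀ {p q s}, rel p q → rel q s → rel p s := by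
    rintro p q s ⟨h1, h2⟩ ⟨h3, h4⟩
    exact ⟨h1.trans h3, fun b hb => (h4 b (h1 hb)).trans (h2 b hb)⟩
  have hfdist : ∀ a a' : A, dist (f a) (f a') ≤ dist (j a) (j a') := by
    intro a a'
    rw [hj.dist_eq]
    have := hf.dist_le_mul a a'
    simpa using this
  let g₀ : B → ↥Q := fun b => if h : ∃ a, j a = b then f h.choose else ⟨q₀, hq₀⟩
  have hg₀ : ∀ a, g₀ (j a) = f a := by
    intro a
    have h : ∃ a', j a' = j a := ⟨a, rfl⟩
    simp only [g₀, dif_pos h]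
    congr 1
    exact hj.injective h.choose_spec
  have hp₀ : Good (Set.range j, g₀) := by
    refine ⟨fun a => ⟨a, rfl⟩, hg₀, ?_⟩
    rintro _ ⟨a, rfl⟩ _ ⟨a', rfl⟩
    show dist (g₀ (j a)) (g₀ (j a')) ≤ _
    rw [hg₀, hg₀]
    exact hfdist a a'
  have hchains : ∀ c, IsChain rel c → ∃ ub, ∀ p ∈ c, rel p ub := by
    intro c hc
    rcases c.eq_empty_or_nonempty with hce | ⟨p1, hp1⟩
    · exact ⟨⟨(Set.range j, g₀), hp₀⟩, by simp [hce]⟩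
    · let sU : Set B := ⋃ p ∈ c, (p : {p : Set B × (B → ↥Q) // Good p}).1.1
      let gU : B → ↥Q := fun b =>
        if h : ∃ p : {p : Set B × (B → ↥Q) // Good p}, p ∈ c ∧ b ∈ p.1.1 then h.choose.1.2 b
        else ⟨q₀, hq₀⟩
      have hcons : ∀ p ∈ c, ∀ b ∈ (p : {p : Set B × (B → ↥Q) // Good p}).1.1,
          gU b = p.1.2 b := by
        intro p hp b hb
        have h : ∃ p' : {p : Set B × (B → ↥Q) // Good p}, p' ∈ c ∧ b ∈ p'.1.1 := ⟨p, hp, hb⟩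
        simp only [gU, dif_pos h]
        obtain ⟨hq, hbq⟩ := h.choose_spec
        rcases eq_or_ne h.choose p with he | hne'
        · rw [he]
        · rcases hc hq hp hne' with hrr | hrr
          · exact (hrr.2 b hbq).symm
          · exact hrr.2 b hb
      have hmemU : ∀ b, b ∈ sU ↔
          ∃ p : {p : Set B × (B → ↥Q) // Good p}, p ∈ c ∧ b ∈ p.1.1 := by
        intro b
        simp [sU, Set.mem_iUnion]
      have hgood : Good (sU, gU) := by
        refine ⟨?_, ?_, ?_⟩
        · intro a
          exact (hmemU _).mpr ⟨p1, hp1, p1.2.1 a⟩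
        · intro a
          have hb : j a ∈ p1.1.1 := p1.2.1 a
          show gU (j a) = f a
          rw [hcons p1 hp1 _ hb, p1.2.2.1 a]
        · intro b hb b' hb'
          obtain ⟨p, hp, hbp⟩ := (hmemU b).mp hb
          obtain ⟨p', hp', hbp'⟩ := (hmemU b').mp hb'
          rcases eq_or_ne p p' with he | hne'
          · subst he
            show dist (gU b) (gU b') ≤ dist b b'
            rw [hcons p hp b hbp, hcons p hp b' hbp']
            exact p.2.2.2 b hbp b' hbp'
          · show dist (gU b) (gU b') ≤ dist b b'
            rcases hc hp hp' hne' with hrr | hrr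
            · rw [hcons p' hp' b (hrr.1 hbp), hcons p' hp' b' hbp']
              exact p'.2.2.2 b (hrr.1 hbp) b' hbp'
            · rw [hcons p hp b hbp, hcons p hp b' (hrr.1 hbp')]
              exact p.2.2.2 b hbp b' (hrr.1 hbp')
      refine ⟨⟨(sU, gU), hgood⟩, fun p hp => ⟨?_, ?_⟩⟩
      · intro b hb
        exact (hmemU _).mpr ⟨p, hp, hb⟩
      · intro b hb
        exact hcons p hp b hb
  obtain ⟨m, hm⟩ := exists_maximal_of_chains_bounded hchains (fun {a b c} => htrans)
  have htot : ∀ b : B, b ∈ m.1.1 := by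
    by_contra hcon
    push_neg at hcon
    obtain ⟨b₀, hb₀⟩ := hcon
    have hz : ∃ z, z ∈ Q ∧ ∀ b ∈ m.1.1, dist z ((m.1.2 b : ↥Q) : Fin (n + 1) → ℝ) ≤ dist b₀ b := by
      rcases m.1.1.eq_empty_or_nonempty with hse | hsne
      · exact ⟨q₀, hq₀, by simp [hse]⟩
      · have : Nonempty ↥(m.1.1) := hsne.to_subtype
        obtain ⟨z, hz1, hz2⟩ := exists_center I rlo rhi hlo hhi hle
          (fun s : ↥(m.1.1) => ((m.1.2 s : ↥Q) : Fin (n + 1) → ℝ))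
          (fun s => (hmem _).mp (m.1.2 (s : B)).2)
          (fun s : ↥(m.1.1) => dist b₀ (s : B))
          (fun s t => by
            have h1 : dist ((m.1.2 (s : B) : ↥Q) : Fin (n + 1) → ℝ)
                ((m.1.2 (t : B) : ↥Q) : Fin (n + 1) → ℝ)
                = dist (m.1.2 (s : B)) (m.1.2 (t : B)) := (Subtype.dist_eq _ _).symm
            rw [h1]
            calc dist (m.1.2 (s : B)) (m.1.2 (t : B)) ≤ dist (s : B) (t : B) :=
                  m.2.2.2 _ s.2 _ t.2
              _ ≤ dist (s : B) b₀ + dist b₀ (t : B) := dist_triangle _ _ _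
              _ = dist b₀ (s : B) + dist b₀ (t : B) := by rw [dist_comm (s : B) b₀])
        exact ⟨z, (hmem z).mpr hz1, fun b hb => hz2 ⟨b, hb⟩⟩
    obtain ⟨z, hzQ, hzd⟩ := hz
    have hgood' : Good (insert b₀ m.1.1, Function.update m.1.2 b₀ ⟨z, hzQ⟩) := by
      refine ⟨fun a => Set.mem_insert_of_mem _ (m.2.1 a), ?_, ?_⟩
      · intro a
        dsimp only
        have hne' : j a ≠ b₀ := fun he => hb₀ (he ▸ m.2.1 a)
        rw [Function.update_of_ne hne']
        exact m.2.2.1 a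
      · intro b hb b' hb'
        dsimp only at hb hb' ⊢
        rcases Set.mem_insert_iff.mp hb with hb1 | hb1 <;>
          rcases Set.mem_insert_iff.mp hb' with hb2 | hb2
        · rw [hb1, hb2]; simp
        · have hne3 : b' ≠ b₀ := fun he => hb₀ (he ▸ hb2)
          rw [hb1, Function.update_self, Function.update_of_ne hne3, Subtype.dist_eq]
          exact hzd b' hb2
        · have hne2 : b ≠ b₀ := fun he => hb₀ (he ▸ hb1)
          rw [hb2, Function.update_self, Function.update_of_ne hne2, Subtype.dist_eq]
          rw [dist_comm ((m.1.2 b : ↥Q) : Fin (n + 1) → ℝ) z, dist_comm b b₀]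
          exact hzd b hb1
        · have hne2 : b ≠ b₀ := fun he => hb₀ (he ▸ hb1)
          have hne3 : b' ≠ b₀ := fun he => hb₀ (he ▸ hb2)
          rw [Function.update_of_ne hne2, Function.update_of_ne hne3]
          exact m.2.2.2 b hb1 b' hb2
    have hrel : rel m ⟨_, hgood'⟩ := by
      refine ⟨Set.subset_insert _ _, fun b hb => ?_⟩
      have hne2 : b ≠ b₀ := fun he => hb₀ (he ▸ hb)
      show Function.update m.1.2 b₀ ⟨z, hzQ⟩ b = m.1.2 b
      exact Function.update_of_ne hne2 _ _
    have := (hm _ hrel).1 (Set.mem_insert b₀ _)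
    exact hb₀ this
  refine ⟨m.1.2, ?_, m.2.2.1⟩
  refine LipschitzWith.of_dist_le_mul fun b b' => ?_
  rw [NNReal.coe_one, one_mul]
  exact m.2.2.2 b (htot b) b' (htot b')
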